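/- arXiv:1205.6719 — 8 statements merged into one kernel-verified Lean document; each statement's English description precedes it below -/
import Mathlib

section
/- Let ν > 0, Ī₂z > 0, K ∈ ℝ, and Ī₁z, Īs, Ī₂x, Ī₂y ∈ ℝ. Let r, φ₂ : ℝ → ℝ be twice differentiable with r(t) > 0 for all t, and suppose they satisfy the reduced equations of motion: r'' = (K − Ī₂z φ₂')² r / I_z(r)² − (1/ν)·V_r(r, φ₂) and φ₂'' = −(1 + ν r²/Ī₂z)·(1/(ν r²))·V_φ(r, φ₂) + 2 r'(K − Ī₂z φ₂')/(r I_z(r)), where V_r and V_φ are the partial derivatives of V. Then the free energy E(t) = K²/(2 I_z(r)) + (1/2)ν (r')² + Ī₂z ν r² (φ₂')²/(2 I_z(r)) + V(r, φ₂) is constant in t. -/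
open Real

/-- The mutual potential of the oblate-primary / ellipsoid system. -/
noncomputable def potV (ν I1z Is I2x I2y I2z : ℝ) (r φ : ℝ) : ℝ :=
  -(ν / r) * (1 + (1 / (2 * r^2)) *
    (((I1z - Is) - (1/2) * I2x - (1/2) * I2y + I2z)
      + (3/2) * (I2y - I2x) * Real.cos (2 * φ)))

/-- Radial partial derivative of the mutual potential. -/
noncomputable def potVr (ν I1z Is I2x I2y I2z : ℝ) (r φ : ℝ) : ℝ :=
  (ν / r^2) * (1 + (3 / (2 * r^2)) *
    (((I1z - Is) - (1/2) * I2x - (1/2) * I2y + I2z)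
      + (3/2) * (I2y - I2x) * Real.cos (2 * φ)))

/-- Libration-angle partial derivative of the mutual potential. -/
noncomputable def potVφ (ν I1z Is I2x I2y I2z : ℝ) (r φ : ℝ) : ℝ :=
  (3 * ν / (2 * r^3)) * (I2y - I2x) * Real.sin (2 * φ)

/-- Conservation of the free energy along solutions of the reduced
two-degree-of-freedom equations of motion. -/
theorem free_energy_conserved
    (ν I2z K I1z Is I2x I2y : ℝ) (hν : 0 < ν) (hI : 0 < I2z)
    (r φ₂ : ℝ → ℝ)
    (hr : Differentiable ℝ r) (hr' : Differentiable ℝ (deriv r))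
    (hφ : Differentiable ℝ φ₂) (hφ' : Differentiable ℝ (deriv φ₂))
    (hrpos : ∀ t, 0 < r t)
    (heomr : ∀ t, deriv (deriv r) t =
      (K - I2z * deriv φ₂ t)^2 * r t / (I2z + ν * (r t)^2)^2
      - (1 / ν) * potVr ν I1z Is I2x I2y I2z (r t) (φ₂ t))
    (heomφ : ∀ t, deriv (deriv φ₂) t =
      -(1 + ν * (r t)^2 / I2z) * (1 / (ν * (r t)^2)) *
        potVφ ν I1z Is I2x I2y I2z (r t) (φ₂ t)
      + 2 * deriv r t * (K - I2z * deriv φ₂ t) / (r t * (I2z + ν * (r t)^2))) :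
    ∀ t s : ℝ,
      K^2 / (2 * (I2z + ν * (r t)^2)) + (1/2) * ν * (deriv r t)^2
        + I2z * ν * (r t)^2 * (deriv φ₂ t)^2 / (2 * (I2z + ν * (r t)^2))
        + potV ν I1z Is I2x I2y I2z (r t) (φ₂ t)
      = K^2 / (2 * (I2z + ν * (r s)^2)) + (1/2) * ν * (deriv r s)^2
        + I2z * ν * (r s)^2 * (deriv φ₂ s)^2 / (2 * (I2z + ν * (r s)^2))
        + potV ν I1z Is I2x I2y I2z (r s) (φ₂ s) := by
  have key : ∀ u : ℝ, HasDerivAt (fun t =>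
      K^2 / (2 * (I2z + ν * (r t)^2)) + (1/2) * ν * (deriv r t)^2
        + I2z * ν * (r t)^2 * (deriv φ₂ t)^2 / (2 * (I2z + ν * (r t)^2))
        + potV ν I1z Is I2x I2y I2z (r t) (φ₂ t)) 0 u := by
    intro u
    have hrne : r u ≠ 0 := (hrpos u).ne'
    have hIzpos : 0 < I2z + ν * (r u)^2 := by positivity
    have hden : (2 : ℝ) * (I2z + ν * (r u)^2) ≠ 0 := by positivity
    have hru : HasDerivAt r (deriv r u) u := (hr u).hasDerivAt
    have hdr' : HasDerivAt (deriv r) (deriv (deriv r) u) u := (hr' u).hasDerivAt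
    have hφu : HasDerivAt φ₂ (deriv φ₂ u) u := (hφ u).hasDerivAt
    have hdφ' : HasDerivAt (deriv φ₂) (deriv (deriv φ₂) u) u := (hφ' u).hasDerivAt
    have hdenD : HasDerivAt (fun t => 2 * (I2z + ν * (r t)^2))
        (2 * (ν * (2 * r u ^ 1 * deriv r u))) u :=
      (((hru.pow 2).const_mul ν).const_add I2z).const_mul 2
    have hA := (hasDerivAt_const u (K^2)).div hdenD hden
    have hB := (hdr'.pow 2).const_mul ((1:ℝ)/2 * ν)
    have hC := (((hru.pow 2).const_mul (I2z * ν)).mul (hdφ'.pow 2)).div hdenD hden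
    have h2r2 : (2 : ℝ) * (r u)^2 ≠ 0 := by positivity
    have hcos : HasDerivAt (fun t => Real.cos (2 * φ₂ t))
        (-Real.sin (2 * φ₂ u) * (2 * deriv φ₂ u)) u := (hφu.const_mul 2).cos
    have hinner := (hcos.const_mul ((3:ℝ)/2 * (I2y - I2x))).const_add
        ((I1z - Is) - (1/2) * I2x - (1/2) * I2y + I2z)
    have h2div := (hasDerivAt_const u (1:ℝ)).div ((hru.pow 2).const_mul 2) h2r2
    have hmid := (h2div.mul hinner).const_add 1
    have hfrac := (hasDerivAt_const u ν).div hru hrne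
    have hD := hfrac.neg.mul hmid
    have hsum := ((hA.add hB).add hC).add hD
    simp only [potV]
    convert hsum using 1
    case e'_4 | e'_5 | e'_8 => rfl
    rw [heomr u, heomφ u]
    simp only [potVr, potVφ]
    simp only [Pi.div_apply, Pi.mul_apply, Pi.neg_apply, Pi.pow_apply, Pi.add_apply, Nat.cast_ofNat]
    field_simp
    ring
  intro t s
  exact is_const_of_deriv_eq_zero (fun u => (key u).differentiableAt)
    (fun u => (key u).deriv) t s
end

section
/- (Sufficient condition for bounded libration via zero-velocity curves.) Let ν > 0, Ī₂z > 0, K ∈ ℝ, and Ī₁z, Īs, Ī₂x, Ī₂y ∈ ℝ, and define W(r,φ) = K²/(2(Ī₂z + ν r²)) + V(r,φ). Let r, φ₂ : ℝ → ℝ be continuous with r(t) > 0 for all t, and let E ∈ ℝ satisfy W(r(t), φ₂(t)) ≤ E for all t (the zero-velocity inequality). Suppose there exist 0 < r₁ < r₂ such that W(r₁, φ) > E and W(r₂, φ) > E for every φ ∈ ℝ, and W(ρ, π/2) > E and W(ρ, −π/2) > E for every ρ ∈ [r₁, r₂]. If r(0) ∈ (r₁, r₂) and φ₂(0) ∈ (−π/2,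 π/2), then for all t ∈ ℝ one has r(t) ∈ (r₁, r₂) and φ₂(t) ∈ (−π/2, π/2); in particular the libration angle stays strictly below 90 degrees for all time. -/
open Real

/-- The effective (zero-velocity) potential `W(r,φ) = K²/(2 I_z(r)) + V(r,φ)`. -/
noncomputable def potW (ν I2z K I1z Is I2x I2y : ℝ) (r φ : ℝ) : ℝ :=
  K^2 / (2 * (I2z + ν * r^2)) + potV ν I1z Is I2x I2y I2z r φ

/-- Sufficient condition for bounded libration via zero-velocity curves:
if the zero-velocity curve for the energy level `E` seals off the rectangle
`(r₁, r₂) × (−π/2, π/2)` in `(r, φ₂)` space, then a trajectory satisfying the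
zero-velocity inequality that starts inside stays inside; in particular the
libration angle stays strictly below 90°. -/
theorem bounded_libration_of_closed_zvc
    (ν I2z K I1z Is I2x I2y : ℝ) (hν : 0 < ν) (hI : 0 < I2z)
    (r φ₂ : ℝ → ℝ) (hrc : Continuous r) (hφc : Continuous φ₂)
    (hrpos : ∀ t, 0 < r t)
    (E : ℝ)
    (hZVC : ∀ t, potW ν I2z K I1z Is I2x I2y (r t) (φ₂ t) ≤ E)
    (r₁ r₂ : ℝ) (hr₁ : 0 < r₁) (hr₁₂ : r₁ < r₂)
    (hW₁ : ∀ φ : ℝ, E < potW ν I2z K I1z Is I2x I2y r₁ φ)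
    (hW₂ : ∀ φ : ℝ, E < potW ν I2z K I1z Is I2x I2y r₂ φ)
    (hWp : ∀ ρ ∈ Set.Icc r₁ r₂, E < potW ν I2z K I1z Is I2x I2y ρ (π/2))
    (hWm : ∀ ρ ∈ Set.Icc r₁ r₂, E < potW ν I2z K I1z Is I2x I2y ρ (-(π/2)))
    (h0r : r 0 ∈ Set.Ioo r₁ r₂) (h0φ : φ₂ 0 ∈ Set.Ioo (-(π/2)) (π/2)) :
    ∀ t : ℝ, r t ∈ Set.Ioo r₁ r₂ ∧ φ₂ t ∈ Set.Ioo (-(π/2)) (π/2) := by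
  set S : Set ℝ := {t | r t ∈ Set.Ioo r₁ r₂ ∧ φ₂ t ∈ Set.Ioo (-(π/2)) (π/2)} with hS
  set T : Set ℝ := {t | r t ∈ Set.Icc r₁ r₂ ∧ φ₂ t ∈ Set.Icc (-(π/2)) (π/2)} with hT
  have hST : S = T := by
    ext t
    constructor
    · rintro ⟨h1, h2⟩
      exact ⟨⟨le_of_lt h1.1, le_of_lt h1.2⟩, ⟨le_of_lt h2.1, le_of_lt h2.2⟩⟩
    · rintro ⟨⟨h1, h2⟩, h3, h4⟩
      have hz := hZVC t
      have hr1 : r₁ ≠ r t := by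
        intro h
        exact absurd (h ▸ hz) (not_le.mpr (hW₁ (φ₂ t)))
      have hr2 : r t ≠ r₂ := by
        intro h
        exact absurd (h ▸ hz) (not_le.mpr (hW₂ (φ₂ t)))
      have hp : φ₂ t ≠ π/2 := by
        intro h
        exact absurd (h ▸ hz) (not_le.mpr (hWp (r t) ⟨h1, h2⟩))
      have hm : -(π/2) ≠ φ₂ t := by
        intro h
        exact absurd (h ▸ hz) (not_le.mpr (hWm (r t) ⟨h1, h2⟩))
      exact ⟨⟨lt_of_le_of_ne h1 hr1, lt_of_le_of_ne h2 hr2⟩,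
        ⟨lt_of_le_of_ne h3 hm, lt_of_le_of_ne h4 hp⟩⟩
  have hopen : IsOpen S := by
    have : S = (r ⁻¹' Set.Ioo r₁ r₂) ∩ (φ₂ ⁻¹' Set.Ioo (-(π/2)) (π/2)) := rfl
    rw [this]
    exact (isOpen_Ioo.preimage hrc).inter (isOpen_Ioo.preimage hφc)
  have hclosed : IsClosed S := by
    rw [hST]
    have : T = (r ⁻¹' Set.Icc r₁ r₂) ∩ (φ₂ ⁻¹' Set.Icc (-(π/2)) (π/2)) := rfl
    rw [this]
    exact (isClosed_Icc.preimage hrc).inter (isClosed_Icc.preimage hφc)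
  have huniv : S = Set.univ :=
    IsClopen.eq_univ ⟨hclosed, hopen⟩ ⟨0, h0r, h0φ⟩
  intro t
  have : t ∈ S := huniv ▸ Set.mem_univ t
  exact this
end

section
/- Let ν > 0, Ī₂z > 0, Ī₂y > Ī₂x, and K ∈ ℝ. Consider the free energy E(r, φ₂, ṙ, φ̇₂) = K²/(2 I_z(r)) + (1/2)ν ṙ² + Ī₂z ν r² φ̇₂²/(2 I_z(r)) + V(r, φ₂) on the domain r > 0. If at a point (r, φ₂, ṙ, φ̇₂) all four partial derivatives of E vanish, then ṙ = 0, φ̇₂ = 0, and sin 2φ₂ = 0 (so φ₂ ∈ {0, ±π/2, π} modulo 2π); furthermore, at such a point the remaining stationarity condition ∂E/∂r = 0 reads −ν r K²/I_z(r)² + (ν/r²)·[1 + 3(Ī₁z − Īs + C₂)/(2r²)] = 0, where C₂ = −2Ī₂x + Ī₂y + Ī₂z if cos 2φ₂ = 1 and C₂ = Ī₂x − 2Ī₂y + Ī₂z if cos 2φ₂ = −1. -/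
open Real

/-- The free energy of the reduced system as a function of the state
`(r, φ₂, ṙ, φ̇₂)`. -/
noncomputable def freeE (ν I2z K I1z Is I2x I2y : ℝ)
    (r φ₂ rdot φdot : ℝ) : ℝ :=
  K^2 / (2 * (I2z + ν * r^2)) + (1/2) * ν * rdot^2
    + I2z * ν * r^2 * φdot^2 / (2 * (I2z + ν * r^2))
    + potV ν I1z Is I2x I2y I2z r φ₂

/-- Stationary points of the free energy at fixed free angular momentum:
all four partials vanishing forces `ṙ = 0`, `φ̇₂ = 0`, `sin 2φ₂ = 0`, and the
radial stationarity condition with the appropriate `C₂±`. -/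
theorem relative_equilibrium_conditions
    (ν I2z I1z Is I2x I2y K : ℝ) (hν : 0 < ν) (hI : 0 < I2z)
    (hxy : I2x < I2y)
    (r φ₂ rdot φdot : ℝ) (hr : 0 < r)
    (h₁ : deriv (fun x => freeE ν I2z K I1z Is I2x I2y x φ₂ rdot φdot) r = 0)
    (h₂ : deriv (fun x => freeE ν I2z K I1z Is I2x I2y r x rdot φdot) φ₂ = 0)
    (h₃ : deriv (fun x => freeE ν I2z K I1z Is I2x I2y r φ₂ x φdot) rdot = 0)
    (h₄ : deriv (fun x => freeE ν I2z K I1z Is I2x I2y r φ₂ rdot x) φdot = 0) :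
    rdot = 0 ∧ φdot = 0 ∧ Real.sin (2 * φ₂) = 0 ∧
    ((Real.cos (2 * φ₂) = 1 →
      -(ν) * r * K^2 / (I2z + ν * r^2)^2
        + (ν / r^2) * (1 + 3 * (I1z - Is + (-2*I2x + I2y + I2z)) / (2 * r^2)) = 0) ∧
     (Real.cos (2 * φ₂) = -1 →
      -(ν) * r * K^2 / (I2z + ν * r^2)^2
        + (ν / r^2) * (1 + 3 * (I1z - Is + (I2x - 2*I2y + I2z)) / (2 * r^2)) = 0)) := by
  have hden : (0:ℝ) < I2z + ν * r^2 := by positivity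
  -- rdot = 0
  have c3 : HasDerivAt (fun x => freeE ν I2z K I1z Is I2x I2y r φ₂ x φdot)
      (ν * rdot) rdot := by
    have he : (fun x => freeE ν I2z K I1z Is I2x I2y r φ₂ x φdot)
        = fun x => (1/2)*ν*x^2 + (K^2 / (2 * (I2z + ν * r^2))
            + I2z * ν * r^2 * φdot^2 / (2 * (I2z + ν * r^2))
            + potV ν I1z Is I2x I2y I2z r φ₂) := by
      funext x; simp only [freeE]; ring
    rw [he]
    have h := ((hasDerivAt_pow 2 rdot).const_mul ((1:ℝ)/2*ν)).add_const
      (K^2 / (2 * (I2z + ν * r^2))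
        + I2z * ν * r^2 * φdot^2 / (2 * (I2z + ν * r^2))
        + potV ν I1z Is I2x I2y I2z r φ₂)
    refine h.congr_deriv ?_
    push_cast; ring
  have hrdot : rdot = 0 := by
    have := c3.deriv
    rw [h₃] at this
    have := this.symm
    rcases mul_eq_zero.mp this with h | h
    · exact absurd h hν.ne'
    · exact h
  -- φdot = 0
  have c4 : HasDerivAt (fun x => freeE ν I2z K I1z Is I2x I2y r φ₂ rdot x)
      ((I2z * ν * r^2 / (2 * (I2z + ν * r^2))) * (2 * φdot)) φdot := by
    have he : (fun x => freeE ν I2z K I1z Is I2x I2y r φ₂ rdot x)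
        = fun x => (I2z * ν * r^2 / (2 * (I2z + ν * r^2))) * x^2
            + (K^2 / (2 * (I2z + ν * r^2)) + (1/2)*ν*rdot^2
              + potV ν I1z Is I2x I2y I2z r φ₂) := by
      funext x; simp only [freeE]; ring
    rw [he]
    have h := ((hasDerivAt_pow 2 φdot).const_mul
        (I2z * ν * r^2 / (2 * (I2z + ν * r^2)))).add_const
      (K^2 / (2 * (I2z + ν * r^2)) + (1/2)*ν*rdot^2
        + potV ν I1z Is I2x I2y I2z r φ₂)
    refine h.congr_deriv ?_
    push_cast; ring
  have hφdot : φdot = 0 := by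
    have := c4.deriv
    rw [h₄] at this
    have hD : (0:ℝ) < I2z * ν * r^2 / (2 * (I2z + ν * r^2)) := by positivity
    rcases mul_eq_zero.mp this.symm with h | h
    · exact absurd h hD.ne'
    · linarith
  -- sin (2 φ₂) = 0
  have c2 : HasDerivAt (fun x => freeE ν I2z K I1z Is I2x I2y r x rdot φdot)
      ((-(ν/r) * (1/(2*r^2)) * ((3:ℝ)/2 * (I2y - I2x))) * (-Real.sin (2*φ₂) * 2)) φ₂ := by
    have he : (fun x => freeE ν I2z K I1z Is I2x I2y r x rdot φdot)
        = fun x => (-(ν/r) * (1/(2*r^2)) * ((3:ℝ)/2 * (I2y - I2x))) * Real.cos (2*x)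
            + (K^2 / (2 * (I2z + ν * r^2)) + (1/2)*ν*rdot^2
              + I2z * ν * r^2 * φdot^2 / (2 * (I2z + ν * r^2))
              + (-(ν/r)) * (1 + (1/(2*r^2)) *
                ((I1z - Is) - (1/2)*I2x - (1/2)*I2y + I2z))) := by
      funext x; simp only [freeE, potV]; ring
    rw [he]
    have hin : HasDerivAt (fun x : ℝ => 2 * x) 2 φ₂ := by
      simpa using (hasDerivAt_id φ₂).const_mul (2:ℝ)
    have hcos : HasDerivAt (fun x : ℝ => Real.cos (2*x)) (-Real.sin (2*φ₂) * 2) φ₂ :=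
      (Real.hasDerivAt_cos (2*φ₂)).comp φ₂ hin
    exact (hcos.const_mul _).add_const _
  have hsin : Real.sin (2 * φ₂) = 0 := by
    have := c2.deriv
    rw [h₂] at this
    have hB : (0:ℝ) < (ν/r) * (1/(2*r^2)) * ((3:ℝ)/2 * (I2y - I2x)) := by
      have : (0:ℝ) < I2y - I2x := by linarith
      positivity
    rcases mul_eq_zero.mp this.symm with h | h
    · exfalso; nlinarith
    · nlinarith [h]
  refine ⟨hrdot, hφdot, hsin, ?_⟩
  -- radial equation
  subst hφdot
  have hA : ∀ A : ℝ, HasDerivAt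
      (fun x => (K^2 / (2 * (I2z + ν * x^2)) + (1/2)*ν*rdot^2 - ν / x)
        - ν * A / (2 * x^3))
      (((0 * (2 * (I2z + ν * r^2)) - K^2 * (2 * (ν * (2*r)))) / (2 * (I2z + ν * r^2))^2
        - (0 * r - ν * 1) / r^2)
        - (0 * (2 * r^3) - ν * A * (2 * (3 * r^2))) / (2 * r^3)^2) r := by
    intro A
    have hd1 : HasDerivAt (fun x : ℝ => 2 * (I2z + ν * x^2)) (2 * (ν * (2*r))) r := by
      have h := (((hasDerivAt_pow 2 r).const_mul ν).const_add I2z).const_mul (2:ℝ)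
      refine h.congr_deriv ?_
      push_cast; ring
    have t1 : HasDerivAt (fun x : ℝ => K^2 / (2 * (I2z + ν * x^2)))
        ((0 * (2 * (I2z + ν * r^2)) - K^2 * (2 * (ν * (2*r)))) / (2 * (I2z + ν * r^2))^2) r :=
      (hasDerivAt_const r (K^2)).div hd1 (by positivity)
    have t3 : HasDerivAt (fun x : ℝ => ν / x) ((0 * r - ν * 1) / r^2) r :=
      (hasDerivAt_const r ν).div (hasDerivAt_id r) hr.ne'
    have hd3 : HasDerivAt (fun x : ℝ => 2 * x^3) (2 * (3 * r^2)) r := by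
      have h := (hasDerivAt_pow 3 r).const_mul (2:ℝ)
      refine h.congr_deriv ?_
      norm_num
    have t4 : HasDerivAt (fun x : ℝ => ν * A / (2 * x^3))
        ((0 * (2 * r^3) - ν * A * (2 * (3 * r^2))) / (2 * r^3)^2) r :=
      (hasDerivAt_const r (ν * A)).div hd3 (by positivity)
    exact ((t1.add_const _).sub t3).sub t4
  have key : ∀ c : ℝ, Real.cos (2 * φ₂) = c →
      ((0 * (2 * (I2z + ν * r^2)) - K^2 * (2 * (ν * (2*r)))) / (2 * (I2z + ν * r^2))^2
        - (0 * r - ν * 1) / r^2)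
        - (0 * (2 * r^3) - ν * ((I1z - Is) - (1/2)*I2x - (1/2)*I2y + I2z
            + (3/2)*(I2y - I2x)*c) * (2 * (3 * r^2))) / (2 * r^3)^2 = 0 := by
    intro c hc
    have he : (fun x => freeE ν I2z K I1z Is I2x I2y x φ₂ rdot 0)
        = fun x => (K^2 / (2 * (I2z + ν * x^2)) + (1/2)*ν*rdot^2 - ν / x)
            - ν * ((I1z - Is) - (1/2)*I2x - (1/2)*I2y + I2z
              + (3/2)*(I2y - I2x)*c) / (2 * x^3) := by
      funext x; simp only [freeE, potV, hc]; ring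
    have hd := (hA ((I1z - Is) - (1/2)*I2x - (1/2)*I2y + I2z + (3/2)*(I2y - I2x)*c)).deriv
    rw [← he] at hd
    rw [h₁] at hd
    exact hd.symm
  have hr' : r ≠ 0 := hr.ne'
  have hden' : I2z + ν * r^2 ≠ 0 := hden.ne'
  constructor
  · intro hc
    have hk := key 1 hc
    have heq : -(ν) * r * K^2 / (I2z + ν * r^2)^2
        + (ν / r^2) * (1 + 3 * (I1z - Is + (-2*I2x + I2y + I2z)) / (2 * r^2))
        = ((0 * (2 * (I2z + ν * r^2)) - K^2 * (2 * (ν * (2*r)))) / (2 * (I2z + ν * r^2))^2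
            - (0 * r - ν * 1) / r^2)
          - (0 * (2 * r^3) - ν * ((I1z - Is) - (1/2)*I2x - (1/2)*I2y + I2z
              + (3/2)*(I2y - I2x)*1) * (2 * (3 * r^2))) / (2 * r^3)^2 := by
      field_simp
      ring
    rw [heq]; exact hk
  · intro hc
    have hk := key (-1) hc
    have heq : -(ν) * r * K^2 / (I2z + ν * r^2)^2
        + (ν / r^2) * (1 + 3 * (I1z - Is + (I2x - 2*I2y + I2z)) / (2 * r^2))
        = ((0 * (2 * (I2z + ν * r^2)) - K^2 * (2 * (ν * (2*r)))) / (2 * (I2z + ν * r^2))^2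
            - (0 * r - ν * 1) / r^2)
          - (0 * (2 * r^3) - ν * ((I1z - Is) - (1/2)*I2x - (1/2)*I2y + I2z
              + (3/2)*(I2y - I2x)*(-1)) * (2 * (3 * r^2))) / (2 * r^3)^2 := by
      field_simp
      ring
    rw [heq]; exact hk
end

section
/- Let ν > 0, Ī₂z > 0, Ī₂y > Ī₂x, K ∈ ℝ, and consider the free energy E(r, φ₂, ṙ, φ̇₂) = K²/(2 I_z(r)) + (1/2)ν ṙ² + Ī₂z ν r² φ̇₂²/(2 I_z(r)) + V(r, φ₂) on the domain r > 0. Then for every r₀ > 0, the point (r₀, π/2, 0, 0) is neither a local minimum nor a local maximum of E: every neighborhood of this point contains points where E is strictly larger (obtained by varying ṙ) and points where E is strictly smaller (obtained by varying φ₂ away from π/2). In particular, the φ₂ = 90° relative equilibrium is always an energetic saddle point. -/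
open Real

section Aux

variable (ν I2z I1z Is I2x I2y K : ℝ)

lemma freeE_rdot_gt (hν : 0 < ν) (r₀ : ℝ) {t : ℝ} (ht : t ≠ 0) :
    freeE ν I2z K I1z Is I2x I2y r₀ (π/2) 0 0
      < freeE ν I2z K I1z Is I2x I2y r₀ (π/2) t 0 := by
  unfold freeE
  have h : (0:ℝ) < (1/2) * ν * t^2 := by positivity
  nlinarith [h]

lemma freeE_phi_lt (hν : 0 < ν) (hxy : I2x < I2y) {r₀ : ℝ} (hr₀ : 0 < r₀)
    {φ : ℝ} (hc : Real.cos (2 * φ) > -1) :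
    freeE ν I2z K I1z Is I2x I2y r₀ φ 0 0
      < freeE ν I2z K I1z Is I2x I2y r₀ (π/2) 0 0 := by
  have hcos : Real.cos (2 * (π/2)) = -1 := by
    rw [show 2 * (π/2) = π by ring, Real.cos_pi]
  set c := Real.cos (2 * φ) with hcdef
  have key : freeE ν I2z K I1z Is I2x I2y r₀ φ 0 0
      - freeE ν I2z K I1z Is I2x I2y r₀ (π/2) 0 0
      = -((ν / r₀) * (1 / (2 * r₀^2)) * ((3/2) * (I2y - I2x)) * (c + 1)) := by
    unfold freeE potV
    rw [hcos, ← hcdef]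
    ring
  have hpos : 0 < (ν / r₀) * (1 / (2 * r₀^2)) * ((3/2) * (I2y - I2x)) * (c + 1) := by
    have h1 : 0 < ν / r₀ := by positivity
    have h2 : 0 < 1 / (2 * r₀^2) := by positivity
    have h3 : 0 < (3/2) * (I2y - I2x) := by linarith
    have h4 : 0 < c + 1 := by linarith
    positivity
  linarith [key, hpos]

lemma cos_two_mul_lt_one {δ : ℝ} (h0 : 0 < δ) (h1 : δ < π) :
    Real.cos (2 * δ) < 1 := by
  have hs : 0 < Real.sin δ := Real.sin_pos_of_pos_of_lt_pi h0 h1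
  have hsc : Real.sin δ ^ 2 + Real.cos δ ^ 2 = 1 := Real.sin_sq_add_cos_sq δ
  have h2 : Real.cos (2 * δ) = 2 * Real.cos δ ^ 2 - 1 := Real.cos_two_mul δ
  nlinarith

end Aux

/-- The `φ₂ = 90°` relative equilibrium is always an energetic saddle point:
the point `(r₀, π/2, 0, 0)` is neither a local minimum nor a local maximum of
the free energy, since every neighborhood contains points with strictly larger
energy (varying `ṙ`) and points with strictly smaller energy (varying `φ₂`). -/
theorem ninety_degree_equilibrium_is_saddle
    (ν I2z I1z Is I2x I2y K : ℝ) (hν : 0 < ν) (hI : 0 < I2z)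
    (hxy : I2x < I2y) (r₀ : ℝ) (hr₀ : 0 < r₀) :
    ¬ IsLocalMin (fun p : ℝ × ℝ × ℝ × ℝ =>
        freeE ν I2z K I1z Is I2x I2y p.1 p.2.1 p.2.2.1 p.2.2.2)
        (r₀, π/2, 0, 0) ∧
    ¬ IsLocalMax (fun p : ℝ × ℝ × ℝ × ℝ =>
        freeE ν I2z K I1z Is I2x I2y p.1 p.2.1 p.2.2.1 p.2.2.2)
        (r₀, π/2, 0, 0) ∧
    ∀ ε > (0 : ℝ),
      (∃ rdot : ℝ, |rdot| < ε ∧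
        freeE ν I2z K I1z Is I2x I2y r₀ (π/2) 0 0
          < freeE ν I2z K I1z Is I2x I2y r₀ (π/2) rdot 0) ∧
      (∃ φ : ℝ, |φ - π/2| < ε ∧
        freeE ν I2z K I1z Is I2x I2y r₀ φ 0 0
          < freeE ν I2z K I1z Is I2x I2y r₀ (π/2) 0 0) := by
  -- a helper producing good points at any scale
  have main : ∀ ε > (0:ℝ),
      (∃ rdot : ℝ, |rdot| < ε ∧
        freeE ν I2z K I1z Is I2x I2y r₀ (π/2) 0 0
          < freeE ν I2z K I1z Is I2x I2y r₀ (π/2) rdot 0) ∧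
      (∃ φ : ℝ, |φ - π/2| < ε ∧
        freeE ν I2z K I1z Is I2x I2y r₀ φ 0 0
          < freeE ν I2z K I1z Is I2x I2y r₀ (π/2) 0 0) := by
    intro ε hε
    set δ : ℝ := min (ε/2) 1 with hδdef
    have hδ0 : 0 < δ := lt_min (by linarith) one_pos
    have hδε : δ < ε := lt_of_le_of_lt (min_le_left _ _) (by linarith)
    have hδπ : δ < π := lt_of_le_of_lt (min_le_right _ _)
      (by linarith [Real.pi_gt_three])
    have hcos := cos_two_mul_lt_one hδ0 hδπ
    constructor
    · refine ⟨δ, ?_, freeE_rdot_gt ν I2z I1z Is I2x I2y K hν r₀ (ne_of_gt hδ0)⟩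
      rwa [abs_of_pos hδ0]
    · refine ⟨π/2 + δ, ?_, ?_⟩
      · simpa [abs_of_pos hδ0] using hδε
      · apply freeE_phi_lt ν I2z I1z Is I2x I2y K hν hxy hr₀
        rw [show 2 * (π/2 + δ) = π + 2 * δ by ring]
        simp [Real.cos_add]
        linarith
  refine ⟨?_, ?_, main⟩
  · intro h
    rw [IsLocalMin, IsMinFilter, Metric.eventually_nhds_iff] at h
    obtain ⟨ε, hε, h⟩ := h
    obtain ⟨_, ⟨φ, hφd, hφ⟩⟩ := main ε hε
    have := @h (r₀, φ, 0, 0) (by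
      simp [Prod.dist_eq, Real.dist_eq, hε, hφd])
    simp only at this
    exact absurd this (not_le.mpr hφ)
  · intro h
    rw [IsLocalMax, IsMaxFilter, Metric.eventually_nhds_iff] at h
    obtain ⟨ε, hε, h⟩ := h
    obtain ⟨⟨t, htd, ht⟩, _⟩ := main ε hε
    have := @h (r₀, π/2, t, 0) (by
      simp [Prod.dist_eq, Real.dist_eq, Prod.norm_def, Real.norm_eq_abs, hε, htd])
    simp only at this
    exact absurd this (not_le.mpr ht)
end

section
/- (Sufficient condition for circulation, ν ≈ 1 decoupled case.) Let ν > 0, Ī₂z > 0, A > 0, S ∈ ℝ with S ≥ 3A, and r_a > 0. Let r, φ₂ : ℝ → ℝ be differentiable with 0 < r(t) ≤ r_a for all t, and suppose the libration energy c(t) = Ī₂z ν r² (φ₂')²/(2 I_z(r)) + (3ν/(2r³)) A sin²φ₂ − (ν/(2r³)) S is constant in t. Suppose at some time t₀ we have φ₂(t₀) = 0 and, writing r₀ = r(t₀), the initial libration rate satisfies φ₂'(t₀)² ≥ (I_z(r₀)/(Ī₂z r₀⁵))·[3A + (S − 3A)(1 − r₀³/r_a³)]. Then for every time t at which φ₂'(t)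 = 0 one has sin²φ₂(t) ≥ 1 (hence |sin φ₂(t)| = 1); i.e. the libration rate can only vanish at a libration angle of ±90°, so the secondary cannot turn around inside the libration region and must circulate. -/
open Real

/-- Sufficient condition for circulation in the decoupled (`ν ≈ 1`) case: if
the libration energy is conserved and the initial libration rate at a
`φ₂ = 0` crossing exceeds the circulation bound formed with the apoapsis
radius `r_a`, then the libration rate can only vanish at `|sin φ₂| = 1`, i.e.
at a libration angle of ±90°, so the secondary must circulate. -/
theorem sufficient_condition_for_circulation
    (ν I2z A S ra : ℝ) (hν : 0 < ν) (hI : 0 < I2z) (hA : 0 < A)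
    (hS : 3 * A ≤ S) (hra : 0 < ra)
    (r φ₂ : ℝ → ℝ)
    (hr : Differentiable ℝ r) (hφ : Differentiable ℝ φ₂)
    (hrpos : ∀ t, 0 < r t) (hrb : ∀ t, r t ≤ ra)
    (hc : ∀ t s : ℝ,
      I2z * ν * (r t)^2 * (deriv φ₂ t)^2 / (2 * (I2z + ν * (r t)^2))
        + (3 * ν / (2 * (r t)^3)) * A * (Real.sin (φ₂ t))^2
        - (ν / (2 * (r t)^3)) * S
      = I2z * ν * (r s)^2 * (deriv φ₂ s)^2 / (2 * (I2z + ν * (r s)^2))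
        + (3 * ν / (2 * (r s)^3)) * A * (Real.sin (φ₂ s))^2
        - (ν / (2 * (r s)^3)) * S)
    (t₀ : ℝ) (hφ₀ : φ₂ t₀ = 0)
    (hrate : ((I2z + ν * (r t₀)^2) / (I2z * (r t₀)^5))
        * (3 * A + (S - 3 * A) * (1 - (r t₀)^3 / ra^3))
      ≤ (deriv φ₂ t₀)^2) :
    ∀ t : ℝ, deriv φ₂ t = 0 →
      1 ≤ (Real.sin (φ₂ t))^2 ∧ |Real.sin (φ₂ t)| = 1 := by
  intro t ht
  have hr0 : 0 < r t₀ := hrpos t₀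
  have hrt : 0 < r t := hrpos t
  have hd0 : 0 < I2z + ν * (r t₀)^2 := by positivity
  have hr03 : 0 < (r t₀)^3 := by positivity
  have hrt3 : 0 < (r t)^3 := by positivity
  have hra3 : 0 < ra^3 := by positivity
  set E := 3*A + (S - 3*A) * (1 - (r t₀)^3 / ra^3) with hE
  have hrate' : (I2z + ν * (r t₀)^2) * E ≤ I2z * (r t₀)^5 * (deriv φ₂ t₀)^2 := by
    have h := hrate
    rw [div_mul_eq_mul_div, div_le_iff₀ (by positivity)] at h
    linarith
  have h1 : ν/(2*(r t₀)^3) * E ≤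
      I2z * ν * (r t₀)^2 * (deriv φ₂ t₀)^2 / (2*(I2z + ν * (r t₀)^2)) := by
    rw [div_mul_eq_mul_div, div_le_div_iff₀ (by positivity) (by positivity)]
    nlinarith [mul_le_mul_of_nonneg_left hrate' hν.le, hr03.le, hd0.le]
  have hcd := hc t t₀
  rw [ht, hφ₀] at hcd
  norm_num at hcd
  have h2 : ν/(2*(r t₀)^3) * E - ν/(2*(r t₀)^3) * S ≤
      3 * ν / (2 * (r t)^3) * A * Real.sin (φ₂ t) ^ 2 - ν / (2 * (r t)^3) * S := by
    linarith
  have hD : ν/(2*(r t₀)^3) * E - ν/(2*(r t₀)^3) * S = -(ν*(S-3*A))/(2*ra^3) := by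
    rw [hE]; field_simp; ring
  have hcube : (r t)^3 ≤ ra^3 := pow_le_pow_left₀ hrt.le (hrb t) 3
  have hE2 : -(ν*(S-3*A))/(2*(r t)^3) ≤ -(ν*(S-3*A))/(2*ra^3) := by
    rw [div_le_div_iff₀ (by positivity) (by positivity)]
    nlinarith [mul_nonneg hν.le (sub_nonneg.2 hS)]
  have h3 : -(ν*(S-3*A))/(2*(r t)^3) ≤
      (3*ν*A*(Real.sin (φ₂ t))^2 - ν*S)/(2*(r t)^3) := by
    have hrw : (3*ν*A*(Real.sin (φ₂ t))^2 - ν*S)/(2*(r t)^3)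
        = 3 * ν / (2 * (r t)^3) * A * Real.sin (φ₂ t) ^ 2 - ν / (2 * (r t)^3) * S := by
      ring
    rw [hrw]; linarith
  have h4 : -(ν*(S-3*A)) ≤ 3*ν*A*(Real.sin (φ₂ t))^2 - ν*S :=
    (div_le_div_iff_of_pos_right (by positivity : (0:ℝ) < 2*(r t)^3)).mp h3
  have hs2 : 1 ≤ (Real.sin (φ₂ t))^2 := by nlinarith [mul_pos hν hA]
  refine ⟨hs2, ?_⟩
  have heq : (Real.sin (φ₂ t))^2 = 1 := le_antisymm (Real.sin_sq_le_one _) hs2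
  rw [← Real.sqrt_one, ← heq, Real.sqrt_sq_eq_abs]
end

section
/- (Sufficient condition for bounded libration, ν ≈ 1 decoupled case.) Let ν > 0, Ī₂z > 0, A > 0, S ∈ ℝ with S ≥ 3A, and r_p > 0. Let r, φ₂ : ℝ → ℝ be differentiable with r(t) ≥ r_p for all t, and suppose the libration energy c(t) = Ī₂z ν r² (φ₂')²/(2 I_z(r)) + (3ν/(2r³)) A sin²φ₂ − (ν/(2r³)) S is constant in t. Suppose at some time t₀ we have φ₂(t₀) = 0 and, writing r₀ = r(t₀), the initial libration rate satisfies φ₂'(t₀)² < (I_z(r₀)/(Ī₂z r₀⁵))·[3A + (S − 3A)(1 − r₀³/r_p³)]. Then sin²φ₂(t) < 1 for all t; i.e. the libration angle never reaches ±90° and the secondary never circulates. -/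
open Real

/-- Sufficient condition for bounded libration in the decoupled (`ν ≈ 1`)
case: if the libration energy is conserved and the initial libration rate at a
`φ₂ = 0` crossing is strictly below the bound formed with the periapsis radius
`r_p`, then the libration angle never reaches ±90°. -/
theorem sufficient_condition_for_bounded_libration
    (ν I2z A S rp : ℝ) (hν : 0 < ν) (hI : 0 < I2z) (hA : 0 < A)
    (hS : 3 * A ≤ S) (hrp : 0 < rp)
    (r φ₂ : ℝ → ℝ)
    (hr : Differentiable ℝ r) (hφ : Differentiable ℝ φ₂)
    (hrb : ∀ t, rp ≤ r t)
    (hc : ∀ t s : ℝ,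
      I2z * ν * (r t)^2 * (deriv φ₂ t)^2 / (2 * (I2z + ν * (r t)^2))
        + (3 * ν / (2 * (r t)^3)) * A * (Real.sin (φ₂ t))^2
        - (ν / (2 * (r t)^3)) * S
      = I2z * ν * (r s)^2 * (deriv φ₂ s)^2 / (2 * (I2z + ν * (r s)^2))
        + (3 * ν / (2 * (r s)^3)) * A * (Real.sin (φ₂ s))^2
        - (ν / (2 * (r s)^3)) * S)
    (t₀ : ℝ) (hφ₀ : φ₂ t₀ = 0)
    (hrate : (deriv φ₂ t₀)^2
      < ((I2z + ν * (r t₀)^2) / (I2z * (r t₀)^5))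
          * (3 * A + (S - 3 * A) * (1 - (r t₀)^3 / rp^3))) :
    ∀ t : ℝ, (Real.sin (φ₂ t))^2 < 1 := by
  intro t
  have hrt : 0 < r t := lt_of_lt_of_le hrp (hrb t)
  have hr0 : 0 < r t₀ := lt_of_lt_of_le hrp (hrb t₀)
  have hdenT : (0:ℝ) < I2z + ν * (r t)^2 := by positivity
  have hden0 : (0:ℝ) < I2z + ν * (r t₀)^2 := by positivity
  have heq := hc t t₀
  rw [hφ₀] at heq
  simp only [Real.sin_zero, ne_eq, OfNat.ofNat_ne_zero, not_false_eq_true, zero_pow,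
    mul_zero] at heq
  -- kinetic terms nonnegative
  have hKEt : 0 ≤ I2z * ν * (r t)^2 * (deriv φ₂ t)^2 / (2 * (I2z + ν * (r t)^2)) := by
    positivity
  -- bound on the initial kinetic term
  have hk : (0:ℝ) < I2z * ν * (r t₀)^2 / (2 * (I2z + ν * (r t₀)^2)) := by positivity
  have hKE0 : I2z * ν * (r t₀)^2 * (deriv φ₂ t₀)^2 / (2 * (I2z + ν * (r t₀)^2))
      < ν / (2 * (r t₀)^3) * (3 * A + (S - 3 * A) * (1 - (r t₀)^3 / rp^3)) := by
    have h := mul_lt_mul_of_pos_left hrate hk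
    have e1 : I2z * ν * (r t₀)^2 / (2 * (I2z + ν * (r t₀)^2)) * (deriv φ₂ t₀)^2
        = I2z * ν * (r t₀)^2 * (deriv φ₂ t₀)^2 / (2 * (I2z + ν * (r t₀)^2)) := by
      ring
    have e2 : I2z * ν * (r t₀)^2 / (2 * (I2z + ν * (r t₀)^2)) *
          (((I2z + ν * (r t₀)^2) / (I2z * (r t₀)^5))
            * (3 * A + (S - 3 * A) * (1 - (r t₀)^3 / rp^3)))
        = ν / (2 * (r t₀)^3) * (3 * A + (S - 3 * A) * (1 - (r t₀)^3 / rp^3)) := by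
      field_simp
    rw [e1, e2] at h
    exact h
  -- combine: ν/(2 r0³) * B − ν S/(2 r0³) = −ν (S−3A)/(2 rp³)
  have e3 : ν / (2 * (r t₀)^3) * (3 * A + (S - 3 * A) * (1 - (r t₀)^3 / rp^3))
      - (ν / (2 * (r t₀)^3)) * S = - (ν / 2 * ((S - 3 * A) / rp^3)) := by
    field_simp
    ring
  -- monotonicity in r
  have hcube : rp^3 ≤ (r t)^3 := by
    have := hrb t
    nlinarith [sq_nonneg (r t), sq_nonneg rp, sq_nonneg (r t + rp)]
  have hmono : (S - 3 * A) / (r t)^3 ≤ (S - 3 * A) / rp^3 := by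
    apply div_le_div_of_nonneg_left (by linarith) (by positivity) hcube
  have hmono' : ν / 2 * ((S - 3 * A) / (r t)^3) ≤ ν / 2 * ((S - 3 * A) / rp^3) := by
    apply mul_le_mul_of_nonneg_left hmono (by positivity)
  have e4 : (ν / (2 * (r t)^3)) * S - (3 * ν / (2 * (r t)^3)) * A
      = ν / 2 * ((S - 3 * A) / (r t)^3) := by ring
  -- final bound
  have hT : (0:ℝ) < (3 * ν / (2 * (r t)^3)) * A := by positivity
  have hfin : (3 * ν / (2 * (r t)^3)) * A * (Real.sin (φ₂ t))^2
      < (3 * ν / (2 * (r t)^3)) * A * 1 := by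
    nlinarith [heq, hKEt, hKE0, e3, hmono', e4]
  exact lt_of_mul_lt_mul_left hfin (le_of_lt hT) |>.trans_le (le_of_eq rfl)
end

section
/- (Maximum libration angle, ν ≈ 1 decoupled case.) Let ν > 0, Ī₂z > 0, A ≠ 0, S ∈ ℝ. Let r, φ₂ : ℝ → ℝ be differentiable with r(t) > 0 for all t, and suppose the libration energy c(t) = Ī₂z ν r² (φ₂')²/(2 I_z(r)) + (3ν/(2r³)) A sin²φ₂ − (ν/(2r³)) S is constant in t. Suppose at time t₀ we have φ₂(t₀) = 0 with r₀ = r(t₀) and initial libration rate φ̇₂₀ = φ₂'(t₀). Then at every time t with φ₂'(t) = 0, writing r_m = r(t), the libration angle satisfies the exact relation 3A·sin²φ₂(t) = Ī₂z r₀² r_m³ φ̇₂₀² / I_z(r₀) + S·(1 − r_m³/r₀³). -/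
open Real

/-- Maximum libration angle in the decoupled (`ν ≈ 1`) case: if the libration
energy is conserved, then at every turning point of the libration (where
`φ₂' = 0`) the libration angle satisfies the exact relation
`3A sin²φ₂ = Ī₂z r₀² r_m³ φ̇₂₀²/I_z(r₀) + S (1 − r_m³/r₀³)`. -/
theorem maximum_libration_angle
    (ν I2z A S : ℝ) (hν : 0 < ν) (hI : 0 < I2z) (hA : A ≠ 0)
    (r φ₂ : ℝ → ℝ)
    (hr : Differentiable ℝ r) (hφ : Differentiable ℝ φ₂)
    (hrpos : ∀ t, 0 < r t)
    (hc : ∀ t s : ℝ,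
      I2z * ν * (r t)^2 * (deriv φ₂ t)^2 / (2 * (I2z + ν * (r t)^2))
        + (3 * ν / (2 * (r t)^3)) * A * (Real.sin (φ₂ t))^2
        - (ν / (2 * (r t)^3)) * S
      = I2z * ν * (r s)^2 * (deriv φ₂ s)^2 / (2 * (I2z + ν * (r s)^2))
        + (3 * ν / (2 * (r s)^3)) * A * (Real.sin (φ₂ s))^2
        - (ν / (2 * (r s)^3)) * S)
    (t₀ : ℝ) (hφ₀ : φ₂ t₀ = 0) :
    ∀ t : ℝ, deriv φ₂ t = 0 →
      3 * A * (Real.sin (φ₂ t))^2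
        = I2z * (r t₀)^2 * (r t)^3 * (deriv φ₂ t₀)^2 / (I2z + ν * (r t₀)^2)
          + S * (1 - (r t)^3 / (r t₀)^3) := by
  intro t ht
  have h := hc t t₀
  rw [ht, hφ₀] at h
  simp only [Real.sin_zero] at h
  have h0 := hrpos t₀
  have h1 := hrpos t
  have hd : (0:ℝ) < I2z + ν * (r t₀)^2 := by positivity
  have hd2 : (0:ℝ) < I2z + ν * (r t)^2 := by positivity
  field_simp at h ⊢
  nlinarith [sq_nonneg (r t), sq_nonneg (r t₀), mul_pos h0 h1, hν.le]
end

section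
/- (Uniform condition for guaranteed circulation: the circulation bound is maximized at periapsis.) Let a > 0, 0 ≤ e < 1, ν > 0, Ī₂z > 0, and A, B ≥ 0. For f ∈ ℝ define x(f) = 1 + e cos f, r₀(f) = a(1 − e²)/x(f), and Φ(f) = ((Ī₂z + ν r₀(f)²)/r₀(f)⁵)·[A + B·(1 − (1 − e)³/x(f)³)]. Then for all f ∈ ℝ, Φ(f) ≤ Φ(0); moreover, writing r_p = a(1 − e), one has Φ(0) = ((Ī₂z + ν r_p²)/r_p⁵)·[A + B·2e(3 + e²)/(1 + e)³]. Hence the circulation bound over an entire Keplerian orbit is attained at true anomaly f = 0 (i.e. at periapsis, r₀ = r_p). -/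
open Real

/-- Radius at true anomaly `f` on a Keplerian orbit. -/
noncomputable def kepR (a e f : ℝ) : ℝ := a * (1 - e^2) / (1 + e * Real.cos f)

/-- The circulation bound as a function of the true anomaly `f` of the
`φ₂ = 0` crossing. -/
noncomputable def circBound (a e ν I2z A B : ℝ) (f : ℝ) : ℝ :=
  ((I2z + ν * (kepR a e f)^2) / (kepR a e f)^5) *
    (A + B * (1 - (1 - e)^3 / (1 + e * Real.cos f)^3))

lemma circBound_eq (a e ν I2z A B f : ℝ) (ha : 0 < a) (he0 : 0 ≤ e) (he1 : e < 1)
    (hx : 0 < 1 + e * Real.cos f) :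
    circBound a e ν I2z A B f =
      (I2z * (1 + e * Real.cos f)^2 + ν * (a * (1 - e^2))^2) *
        (A * (1 + e * Real.cos f)^3 + B * ((1 + e * Real.cos f)^3 - (1 - e)^3))
        / (a * (1 - e^2))^5 := by
  have hc : (0:ℝ) < a * (1 - e^2) := by nlinarith [mul_pos ha (mul_pos (sub_pos.mpr he1) (by linarith : (0:ℝ) < 1+e))]
  unfold circBound kepR
  field_simp

/-- Uniform condition for guaranteed circulation: over an entire Keplerian
orbit, the circulation bound is maximized at periapsis (`f = 0`), where it
takes the closed-form value with `r_p = a(1 − e)`. -/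
theorem circulation_bound_max_at_periapsis
    (a e ν I2z A B : ℝ) (ha : 0 < a) (he0 : 0 ≤ e) (he1 : e < 1)
    (hν : 0 < ν) (hI : 0 < I2z) (hA : 0 ≤ A) (hB : 0 ≤ B) :
    (∀ f : ℝ, circBound a e ν I2z A B f ≤ circBound a e ν I2z A B 0) ∧
    circBound a e ν I2z A B 0
      = ((I2z + ν * (a * (1 - e))^2) / (a * (1 - e))^5) *
          (A + B * (2 * e * (3 + e^2) / (1 + e)^3)) := by
  have hc : (0:ℝ) < a * (1 - e^2) := by nlinarith [mul_pos ha (mul_pos (sub_pos.mpr he1) (by linarith : (0:ℝ) < 1+e))]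
  have hx0 : 1 + e * Real.cos 0 = 1 + e := by simp
  have h0 : circBound a e ν I2z A B 0 =
      (I2z * (1 + e)^2 + ν * (a * (1 - e^2))^2) *
        (A * (1 + e)^3 + B * ((1 + e)^3 - (1 - e)^3)) / (a * (1 - e^2))^5 := by
    rw [circBound_eq a e ν I2z A B 0 ha he0 he1 (by rw [hx0]; linarith), hx0]
  constructor
  · intro f
    have hcos := Real.neg_one_le_cos f
    have hcos' := Real.cos_le_one f
    have hxlo : 1 - e ≤ 1 + e * Real.cos f := by nlinarith
    have hxhi : 1 + e * Real.cos f ≤ 1 + e := by nlinarith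
    have hxpos : 0 < 1 + e * Real.cos f := by linarith
    rw [circBound_eq a e ν I2z A B f ha he0 he1 hxpos, h0]
    set x := 1 + e * Real.cos f with hxdef
    gcongr ?_ / (a * (1 - e^2))^5
    have hp2 : x^2 ≤ (1+e)^2 := pow_le_pow_left₀ hxpos.le hxhi 2
    have hp3 : x^3 ≤ (1+e)^3 := pow_le_pow_left₀ hxpos.le hxhi 3
    have hq3 : (1-e)^3 ≤ x^3 := pow_le_pow_left₀ (by linarith) hxlo 3
    have hx3 : 0 < x^3 := by positivity
    have h1 : I2z * x^2 ≤ I2z * (1+e)^2 := by nlinarith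
    have h2 : A * x^3 + B * (x^3 - (1-e)^3) ≤ A * (1+e)^3 + B * ((1+e)^3 - (1-e)^3) := by
      nlinarith
    have h3 : 0 ≤ A * x^3 + B * (x^3 - (1-e)^3) := by nlinarith
    exact mul_le_mul (by linarith) h2 h3 (by positivity)
  · rw [h0]
    have h1e : (0:ℝ) < 1 - e := by linarith
    have h1e' : (0:ℝ) < 1 + e := by linarith
    have hrp : (0:ℝ) < a * (1 - e) := by positivity
    rw [show (1:ℝ) - e^2 = (1-e)*(1+e) by ring]
    field_simp
    ring
end
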